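/- Let U and V be closed subspaces of a Hilbert space H satisfying cos(θ_{U,V⊥}) > 0, and suppose dim(U) = dim(V⊥) = n < ∞. Then U ⊕ V = H. -/

import Mathlib

open Submodule

variable {H : Type*}

/-- The cosine of the subspace angle `θ_{U,W}` between subspaces `U` and `W`:
`cos θ_{U,W} = inf_{u ∈ U, ‖u‖ = 1} ‖Q_W u‖`. -/
noncomputable def cosAngle [NormedAddCommGroup H] [InnerProductSpace ℂ H]
    (U W : Submodule ℂ H) [HasOrthogonalProjection W] : ℝ :=
  sInf {r : ℝ | ∃ u ∈ U, ‖u‖ = 1 ∧ r = ‖(orthogonalProjection W u : H)‖}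

/-- if `U`, `V` are closed subspaces with `cos θ_{U,Vᗮ} > 0` and
`dim U = dim Vᗮ = n < ∞`, then `U ⊕ V = H`. -/
theorem stmt3 [NormedAddCommGroup H] [InnerProductSpace ℂ H] [CompleteSpace H]
    (U V : Submodule ℂ H) (hU : IsClosed (U : Set H)) (hV : IsClosed (V : Set H))
    [HasOrthogonalProjection Vᗮ]
    [FiniteDimensional ℂ U] [FiniteDimensional ℂ Vᗮ] (n : ℕ)
    (hdimU : Module.finrank ℂ U = n) (hdimV : Module.finrank ℂ Vᗮ = n)
    (hangle : 0 < cosAngle U Vᗮ) :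
    IsCompl U V := by
  haveI : CompleteSpace V := hV.completeSpace_coe
  have hVoo : Vᗮᗮ = V := V.orthogonal_orthogonal
  -- disjointness
  have hdisj : Disjoint U V := by
    rw [Submodule.disjoint_def]
    intro x hxU hxV
    by_contra hx
    have hxn : ‖x‖ ≠ 0 := norm_ne_zero_iff.mpr hx
    have h0 : (0 : ℝ) ∈ {r : ℝ | ∃ u ∈ U, ‖u‖ = 1 ∧ r = ‖(orthogonalProjection Vᗮ u : H)‖} := by
      refine ⟨(‖x‖⁻¹ : ℂ) • x, U.smul_mem _ hxU, ?_, ?_⟩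
      · simp [norm_smul, inv_mul_cancel₀ hxn]
      · have hmem : (‖x‖⁻¹ : ℂ) • x ∈ (Vᗮ)ᗮ := by
          rw [hVoo]; exact V.smul_mem _ hxV
        rw [orthogonalProjection_eq_zero_iff.mpr hmem]
        simp
    have hbdd : BddBelow {r : ℝ | ∃ u ∈ U, ‖u‖ = 1 ∧ r = ‖(orthogonalProjection Vᗮ u : H)‖} := by
      refine ⟨0, ?_⟩
      rintro r ⟨u, -, -, rfl⟩
      exact norm_nonneg _
    have := csInf_le hbdd h0
    unfold cosAngle at hangle
    linarith
  -- the projection restricted to U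
  set f : U →ₗ[ℂ] Vᗮ :=
    (orthogonalProjection Vᗮ).toLinearMap.comp U.subtype with hf
  have hinj : Function.Injective f := by
    rw [← LinearMap.ker_eq_bot, Submodule.eq_bot_iff]
    rintro ⟨x, hxU⟩ hx
    have hx' : orthogonalProjection Vᗮ x = 0 := hx
    have hxV : x ∈ V := by
      rw [← hVoo]; exact orthogonalProjection_eq_zero_iff.mp hx'
    have : x = 0 := (Submodule.disjoint_def.mp hdisj) x hxU hxV
    exact Subtype.ext this
  have hsurj : Function.Surjective f := by
    have hr : LinearMap.range f = ⊤ := by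
      apply Submodule.eq_top_of_finrank_eq
      rw [LinearMap.finrank_range_of_inj hinj, hdimU, hdimV]
    exact LinearMap.range_eq_top.mp hr
  refine ⟨hdisj, ?_⟩
  rw [codisjoint_iff, eq_top_iff]
  have htop : V ⊔ Vᗮ = ⊤ := Submodule.sup_orthogonal_of_hasOrthogonalProjection
  rw [← htop]
  refine sup_le le_sup_right ?_
  intro w hw
  obtain ⟨u, hu⟩ := hsurj ⟨w, hw⟩
  have huw : (u : H) - w ∈ V := by
      rw [← hVoo]
      have := sub_starProjection_mem_orthogonal (K := Vᗮ) (u : H)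
      rw [Submodule.starProjection_apply] at this
      have hfu : ((orthogonalProjection Vᗮ (u : H) : Vᗮ) : H) = w := by
        have : f u = ⟨w, hw⟩ := hu
        simpa [hf] using congrArg (Subtype.val) this
      rwa [hfu] at this
  have : w = (u : H) - ((u : H) - w) := by abel
  rw [this]
  exact Submodule.sub_mem _ (Submodule.mem_sup_left u.2) (Submodule.mem_sup_right huw)
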